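/- Along any solution of the dynamical system da/dt = Bc, dB/dt = a c^T, dc/dt = B^T a, for each index k' the quantity c_{k'}² − Σ_k B_{kk'}² is constant in time. -/

import Mathlib

/-- Along any solution of the system `a' = B c`, `B' = a cᵀ`, `c' = Bᵀ a`,
for each index `k'` the quantity `c_{k'}² − Σ_k B_{k k'}²` is constant in time. -/
theorem stmt_1 (m : ℕ) (a c : ℝ → Fin m → ℝ) (B : ℝ → Fin m → Fin m → ℝ)
    (ha : ∀ t i, HasDerivAt (fun s => a s i) (∑ j, B t i j * c t j) t)
    (hB : ∀ t i j, HasDerivAt (fun s => B s i j) (a t i * c t j) t)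
    (hc : ∀ t j, HasDerivAt (fun s => c s j) (∑ i, B t i j * a t i) t) :
    ∀ (k' : Fin m) (t s : ℝ),
      c t k' ^ 2 - ∑ k, B t k k' ^ 2 = c s k' ^ 2 - ∑ k, B s k k' ^ 2 := by
  intro k' t s
  have key : ∀ u : ℝ, HasDerivAt (fun r => c r k' ^ 2 - ∑ k, B r k k' ^ 2) 0 u := by
    intro u
    have h1 : HasDerivAt (fun r => c r k' ^ 2)
        (2 * c u k' * (∑ i, B u i k' * a u i)) u := by
      simpa using ((hc u k').fun_pow 2)
    have h2 : HasDerivAt (fun r => ∑ k, B r k k' ^ 2)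
        (∑ k, 2 * B u k k' * (a u k * c u k')) u := by
      apply HasDerivAt.fun_sum
      intro k _
      simpa using ((hB u k k').fun_pow 2)
    have h := h1.fun_sub h2
    refine h.congr_deriv (Eq.symm ?_)
    rw [Finset.mul_sum]
    rw [eq_comm, sub_eq_zero]
    apply Finset.sum_congr rfl
    intro k _
    ring
  have hf : Differentiable ℝ (fun r => c r k' ^ 2 - ∑ k, B r k k' ^ 2) :=
    fun u => (key u).differentiableAt
  exact is_const_of_deriv_eq_zero hf (fun u => (key u).deriv) t s
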